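/- arXiv:1710.07935 — 2 statements merged into one kernel-verified Lean document; each statement's English description precedes it below -/
import Mathlib

section
/- Let d and k be natural numbers, let T ⊆ ℝ^d be a compact set with Lebesgue measure μ(T) > 0, and let θ ∈ (0,1]. Then there exists a constant C > 0 (depending only on d, k, θ and T) such that for every polynomial function p : ℝ^d → ℝ of total degree at most k and every Lebesgue-measurable set S ⊆ T with μ(S) ≥ θ·μ(T), one has sup_{x ∈ T} |p(x)| ≤ C · (∫_S p(x)² dμ(x))^{1/2}. -/
open MeasureTheory

open MvPolynomial

lemma mvpoly_zero_set_null : ∀ {d : ℕ} (p : MvPolynomial (Fin d) ℝ), p ≠ 0 →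
    volume {x : Fin d → ℝ | eval x p = 0} = 0 := by
  intro d
  induction d with
  | zero =>
    intro p hp
    have h0 : constantCoeff p ≠ 0 := by
      intro h
      apply hp
      rw [eq_C_of_isEmpty p]; rw [show p.coeff 0 = constantCoeff p from rfl, h, map_zero]
    have : {x : Fin 0 → ℝ | eval x p = 0} = ∅ := by
      ext x
      simp only [Set.mem_setOf_eq, Set.mem_empty_iff_false, iff_false]
      rw [eq_C_of_isEmpty p]
      simpa using (show coeff 0 p ≠ 0 from h0)
    rw [this, measure_empty]
  | succ n ih =>
    intro p hp
    set q := finSuccEquiv ℝ n p with hqdef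
    have hq0 : q ≠ 0 := by
      simp only [hqdef, ne_eq, EmbeddingLike.map_eq_zero_iff]
      exact hp
    obtain ⟨j, hj⟩ : ∃ j, q.coeff j ≠ 0 := by
      by_contra h
      push_neg at h
      exact hq0 (Polynomial.ext fun j => by simp [h j])
    have hbad : volume {x : Fin n → ℝ | eval x (q.coeff j) = 0} = 0 := ih _ hj
    set Z : Set (Fin (n + 1) → ℝ) := {v | eval v p = 0} with hZdef
    have hZm : MeasurableSet Z :=
      (isClosed_eq (continuous_eval p) continuous_const).measurableSet
    set e := MeasurableEquiv.piFinSuccAbove (fun _ : Fin (n + 1) => ℝ) 0 with hedef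
    have hpres := (volume_preserving_piFinSuccAbove (fun _ : Fin (n + 1) => ℝ) 0).symm
    have h1 : volume (e.symm ⁻¹' Z) = volume Z :=
      hpres.measure_preimage hZm.nullMeasurableSet
    have hswap : MeasurePreserving (Prod.swap : (Fin n → ℝ) × ℝ → ℝ × (Fin n → ℝ)) volume volume :=
      Measure.measurePreserving_swap
    have h2 : volume (Prod.swap ⁻¹' (e.symm ⁻¹' Z)) = volume (e.symm ⁻¹' Z) :=
      hswap.measure_preimage (e.symm.measurable hZm).nullMeasurableSet
    have hWm : MeasurableSet (Prod.swap ⁻¹' (e.symm ⁻¹' Z) : Set ((Fin n → ℝ) × ℝ)) :=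
      (measurable_swap (e.symm.measurable hZm))
    have hmem : ∀ (x : Fin n → ℝ) (y : ℝ), ((x, y) ∈ Prod.swap ⁻¹' (e.symm ⁻¹' Z)) ↔
        eval (Fin.cons y x : Fin (n + 1) → ℝ) p = 0 := by
      intro x y
      simp only [Set.mem_preimage, Prod.swap_prod_mk, hedef,
        MeasurableEquiv.piFinSuccAbove_symm_apply, Fin.insertNthEquiv, Equiv.coe_fn_mk,
        Fin.insertNth_zero', hZdef, Set.mem_setOf_eq]
    have hW0 : volume (Prod.swap ⁻¹' (e.symm ⁻¹' Z) : Set ((Fin n → ℝ) × ℝ)) = 0 := by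
      rw [show (volume : Measure ((Fin n → ℝ) × ℝ)) =
        (volume : Measure (Fin n → ℝ)).prod (volume : Measure ℝ) from rfl]
      rw [Measure.measure_prod_null hWm]
      have hae : ∀ᵐ x : Fin n → ℝ, eval x (q.coeff j) ≠ 0 := by
        rw [ae_iff]
        simpa using hbad
      filter_upwards [hae] with x hx
      have hr0 : Polynomial.map (eval x) q ≠ 0 := by
        intro h
        apply hx
        have := congrArg (fun r => Polynomial.coeff r j) h
        simpa [Polynomial.coeff_map] using this
      have hfin : Set.Finite {y : ℝ | Polynomial.IsRoot (Polynomial.map (eval x) q) y} :=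
        Polynomial.finite_setOf_isRoot hr0
      have : (Prod.mk x ⁻¹' (Prod.swap ⁻¹' (e.symm ⁻¹' Z))) =
          {y : ℝ | Polynomial.IsRoot (Polynomial.map (eval x) q) y} :=
        Set.ext fun y => (hmem x y).trans (by rw [eval_eq_eval_mv_eval' x y p]; exact Iff.rfl)
      rw [this]
      exact hfin.measure_zero _
    rw [← h1, ← h2, hW0]

noncomputable def DD (d k : ℕ) : Finset (Fin d →₀ ℕ) :=
  Finset.Iic (Finsupp.equivFunOnFinite.symm (fun _ : Fin d => k))

noncomputable def qq (d k : ℕ) (c : ↥(DD d k) → ℝ) : MvPolynomial (Fin d) ℝ :=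
  ∑ s : ↥(DD d k), monomial (s : Fin d →₀ ℕ) (c s)

noncomputable def EE (d k : ℕ) (c : ↥(DD d k) → ℝ) (x : Fin d → ℝ) : ℝ :=
  ∑ s : ↥(DD d k), c s * ∏ i, x i ^ ((s : Fin d →₀ ℕ) i)

lemma mem_DD_iff {d k : ℕ} (s : Fin d →₀ ℕ) : s ∈ DD d k ↔ ∀ i, s i ≤ k := by
  rw [DD, Finset.mem_Iic, Finsupp.le_def]
  simp

lemma EE_eq_eval (d k : ℕ) (c : ↥(DD d k) → ℝ) (x : Fin d → ℝ) :
    EE d k c x = eval x (qq d k c) := by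
  simp only [EE, qq, map_sum, eval_monomial]
  exact Finset.sum_congr rfl fun s _ => by rw [Finsupp.prod_pow]

lemma qq_coeff (d k : ℕ) (c : ↥(DD d k) → ℝ) (t : ↥(DD d k)) :
    (qq d k c).coeff t = c t := by
  rw [qq, coeff_sum]
  rw [Finset.sum_eq_single_of_mem t (Finset.mem_univ t)]
  · rw [coeff_monomial, if_pos rfl]
  · intro s _ hst
    rw [coeff_monomial, if_neg (fun h => hst (Subtype.ext h))]

lemma qq_ne_zero (d k : ℕ) (c : ↥(DD d k) → ℝ) (hc : c ≠ 0) : qq d k c ≠ 0 := by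
  obtain ⟨t, ht⟩ := Function.ne_iff.mp hc
  intro h
  exact ht (by rw [← qq_coeff d k c t, h, coeff_zero]; rfl)

lemma EE_cont (d k : ℕ) (c : ↥(DD d k) → ℝ) : Continuous fun x => EE d k c x := by
  simp only [EE_eq_eval]
  exact continuous_eval _

lemma EE_smul (d k : ℕ) (a : ℝ) (c : ↥(DD d k) → ℝ) (x : Fin d → ℝ) :
    EE d k (a • c) x = a * EE d k c x := by
  simp [EE, Finset.mul_sum, mul_assoc]

lemma EE_sub (d k : ℕ) (c c' : ↥(DD d k) → ℝ) (x : Fin d → ℝ) :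
    EE d k (c - c') x = EE d k c x - EE d k c' x := by
  simp [EE, sub_mul, Finset.sum_sub_distrib]

lemma EE_bound (d k : ℕ) (R : ℝ) (hR : 1 ≤ R) (c : ↥(DD d k) → ℝ) (x : Fin d → ℝ)
    (hx : ∀ i, |x i| ≤ R) :
    |EE d k c x| ≤ (((DD d k).card : ℝ) * (R ^ k) ^ d) * ‖c‖ := by
  have hprod : ∀ s : ↥(DD d k), |∏ i, x i ^ ((s : Fin d →₀ ℕ) i)| ≤ (R ^ k) ^ d := by
    intro s
    rw [Finset.abs_prod]
    calc (∏ i, |x i ^ ((s : Fin d →₀ ℕ) i)|) ≤ ∏ _i : Fin d, R ^ k := by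
          apply Finset.prod_le_prod (fun i _ => abs_nonneg _)
          intro i _
          rw [abs_pow]
          calc |x i| ^ ((s : Fin d →₀ ℕ) i) ≤ R ^ ((s : Fin d →₀ ℕ) i) :=
                pow_le_pow_left₀ (abs_nonneg _) (hx i) _
            _ ≤ R ^ k := pow_le_pow_right₀ hR ((mem_DD_iff _).mp s.2 i)
      _ = (R ^ k) ^ d := by
          rw [Finset.prod_const, Finset.card_univ, Fintype.card_fin]
  calc |EE d k c x| ≤ ∑ s : ↥(DD d k), |c s * ∏ i, x i ^ ((s : Fin d →₀ ℕ) i)| :=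
        Finset.abs_sum_le_sum_abs _ _
    _ ≤ ∑ _s : ↥(DD d k), ‖c‖ * (R ^ k) ^ d := by
        apply Finset.sum_le_sum
        intro s _
        rw [abs_mul]
        have h1 : |c s| ≤ ‖c‖ := by
          rw [← Real.norm_eq_abs]; exact norm_le_pi_norm c s
        exact mul_le_mul h1 (hprod s) (abs_nonneg _) (norm_nonneg _)
    _ = (((DD d k).card : ℝ) * (R ^ k) ^ d) * ‖c‖ := by
        rw [Finset.sum_const, Finset.card_univ, Fintype.card_coe, nsmul_eq_mul]
        ring

lemma eval_eq_EE (d k : ℕ) (p : MvPolynomial (Fin d) ℝ) (hp : p.totalDegree ≤ k)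
    (x : Fin d → ℝ) : eval x p = EE d k (fun s => p.coeff s) x := by
  have hsupp : p.support ⊆ DD d k := by
    intro s hs
    rw [mem_DD_iff]
    intro i
    calc s i ≤ s.sum fun _ e => e := by
          by_cases hi : i ∈ s.support
          · exact Finset.single_le_sum (f := fun i => s i) (fun j _ => Nat.zero_le _) hi
          · rw [Finsupp.notMem_support_iff.mp hi]; exact Nat.zero_le _
      _ ≤ p.totalDegree := le_totalDegree hs
      _ ≤ k := hp
  rw [eval_eq', EE]
  rw [show (∑ s : ↥(DD d k), p.coeff s * ∏ i, x i ^ ((s : Fin d →₀ ℕ) i))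
      = ∑ s ∈ DD d k, p.coeff s * ∏ i, x i ^ s i from
    Finset.sum_attach (DD d k) (fun s => p.coeff s * ∏ i, x i ^ s i)]
  refine (Finset.sum_subset (f := fun s => p.coeff s * ∏ i, x i ^ s i) hsupp fun s _ hns => ?_)
  rw [show p.coeff s = 0 from notMem_support_iff.mp hns, zero_mul]

set_option maxHeartbeats 1600000 in
/-- Proposition A0 of the paper, reference-element form.
If `T ⊆ ℝ^d` is compact with positive Lebesgue measure and `θ ∈ (0,1]`, then there is a
constant `C > 0` such that for every polynomial `p` of total degree at most `k` and every
measurable `S ⊆ T` with `μ S ≥ θ·μ T`, one has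
`sup_{x ∈ T} |p x| ≤ C · (∫_S p² dμ)^{1/2}`. -/
theorem statement_0 (d k : ℕ) (T : Set (Fin d → ℝ)) (hTcomp : IsCompact T)
    (hT0 : 0 < volume T) (θ : ℝ) (hθ : θ ∈ Set.Ioc (0 : ℝ) 1) :
    ∃ C : ℝ, 0 < C ∧
      ∀ p : MvPolynomial (Fin d) ℝ, p.totalDegree ≤ k →
        ∀ S : Set (Fin d → ℝ), MeasurableSet S → S ⊆ T →
          ENNReal.ofReal θ * volume T ≤ volume S →
          (⨆ x ∈ T, |MvPolynomial.eval x p|) ≤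
            C * Real.sqrt (∫ x in S, (MvPolynomial.eval x p) ^ 2) := by
  obtain ⟨hθ0, hθ1⟩ := hθ
  have hTmeas : MeasurableSet T := hTcomp.isClosed.measurableSet
  have hTfinlt : volume T < ⊤ := hTcomp.measure_lt_top
  have hTfin : volume T ≠ ⊤ := hTfinlt.ne
  -- integrability of continuous functions on subsets of T
  have hIntOn : ∀ g : (Fin d → ℝ) → ℝ, Continuous g → ∀ S : Set (Fin d → ℝ), S ⊆ T →
      IntegrableOn g S volume := fun g hg S hST =>
    (hg.continuousOn.integrableOn_compact hTcomp).mono_set hST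
  -- uniform bound on T
  obtain ⟨R, hR1, hRb⟩ : ∃ R : ℝ, 1 ≤ R ∧ ∀ x ∈ T, ∀ i, |x i| ≤ R := by
    obtain ⟨r, hr⟩ := hTcomp.isBounded.subset_ball 0
    refine ⟨max r 1, le_max_right _ _, fun x hx i => ?_⟩
    have hx' : dist x 0 < r := Metric.mem_ball.mp (hr hx)
    calc |x i| = ‖x i‖ := (Real.norm_eq_abs _).symm
      _ ≤ ‖x‖ := norm_le_pi_norm x i
      _ = dist x 0 := by rw [dist_zero_right]
      _ ≤ max r 1 := le_trans hx'.le (le_max_left _ _)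
  set K : ℝ := ((DD d k).card : ℝ) * (R ^ k) ^ d with hKdef
  have hDD0 : (0 : Fin d →₀ ℕ) ∈ DD d k := (mem_DD_iff _).mpr fun i => Nat.zero_le _
  have hK0 : 0 < K := by
    apply mul_pos
    · exact_mod_cast Finset.card_pos.mpr ⟨0, hDD0⟩
    · positivity
  have hKb : ∀ (c : ↥(DD d k) → ℝ) (x : Fin d → ℝ), x ∈ T → |EE d k c x| ≤ K * ‖c‖ :=
    fun c x hx => EE_bound d k R hR1 c x (hRb x hx)
  -- Step 1
  have key1 : ∀ c : ↥(DD d k) → ℝ, c ≠ 0 → ∃ ε : ℝ, 0 < ε ∧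
      ∀ S : Set (Fin d → ℝ), MeasurableSet S → S ⊆ T →
        ENNReal.ofReal θ * volume T ≤ volume S → ε ≤ ∫ x in S, (EE d k c x) ^ 2 := by
    intro c hc
    have hnull : volume {x : Fin d → ℝ | eval x (qq d k c) = 0} = 0 :=
      mvpoly_zero_set_null _ (qq_ne_zero d k c hc)
    have hfc : Continuous fun x => EE d k c x := EE_cont d k c
    set A : ℕ → Set (Fin d → ℝ) :=
      fun n => T ∩ {x | (EE d k c x) ^ 2 < 1 / (n + 1)} with hA
    have hAm : ∀ n, MeasurableSet (A n) := fun n =>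
      hTmeas.inter (measurableSet_lt (hfc.pow 2).measurable measurable_const)
    have hAanti : Antitone A := by
      intro a b hab
      apply Set.inter_subset_inter_right
      intro x hx
      simp only [Set.mem_setOf_eq] at hx ⊢
      refine lt_of_lt_of_le hx ?_
      apply one_div_le_one_div_of_le
      · positivity
      · have : (a : ℝ) ≤ (b : ℝ) := Nat.cast_le.mpr hab
        linarith
    have hsubnull : (⋂ n, A n) ⊆ {x : Fin d → ℝ | eval x (qq d k c) = 0} := by
      intro x hx
      simp only [Set.mem_iInter] at hx
      have hf0 : (EE d k c x) ^ 2 ≤ 0 := by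
        by_contra h
        push_neg at h
        obtain ⟨n, hn⟩ := exists_nat_one_div_lt h
        exact absurd ((hx n).2) (not_lt.mpr hn.le)
      have : EE d k c x = 0 := by
        have := sq_nonneg (EE d k c x)
        have h2 : (EE d k c x) ^ 2 = 0 := le_antisymm hf0 this
        exact pow_eq_zero_iff (two_ne_zero) |>.mp h2
      show eval x (qq d k c) = 0
      rw [← EE_eq_eval]
      exact this
    have hiInter0 : volume (⋂ n, A n) = 0 := measure_mono_null hsubnull hnull
    have hlim := tendsto_measure_iInter_atTop (μ := volume)
      (fun n => (hAm n).nullMeasurableSet) hAanti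
      ⟨0, ((measure_mono Set.inter_subset_left).trans_lt hTfinlt).ne⟩
    rw [hiInter0] at hlim
    have hτfin : ENNReal.ofReal θ * volume T ≠ ⊤ :=
      ENNReal.mul_ne_top ENNReal.ofReal_ne_top hTfin
    have hhalfpos : 0 < ENNReal.ofReal θ * volume T / 2 := by
      apply ENNReal.div_pos
      · exact (ENNReal.mul_pos (ENNReal.ofReal_pos.mpr hθ0).ne' hT0.ne').ne'
      · norm_num
    obtain ⟨n, hn⟩ := (hlim.eventually_lt_const hhalfpos).exists
    have hn' : volume (A n) < ENNReal.ofReal θ * volume T / 2 := hn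
    have hhalffin : ENNReal.ofReal θ * volume T / 2 ≠ ⊤ :=
      (ENNReal.div_lt_top hτfin (by norm_num)).ne
    refine ⟨(1 / (n + 1) : ℝ) * (ENNReal.ofReal θ * volume T / 2).toReal, ?_, ?_⟩
    · have h1 : (0:ℝ) < 1 / (n + 1) := by positivity
      have h2 : 0 < (ENNReal.ofReal θ * volume T / 2).toReal :=
        ENNReal.toReal_pos hhalfpos.ne' hhalffin
      positivity
    · intro S hSm hST hSθ
      set S' := S \ A n with hS'
      have hS'm : MeasurableSet S' := hSm.diff (hAm n)
      have hS'T : S' ⊆ T := Set.diff_subset.trans hST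
      have hS'fin : volume S' ≠ ⊤ := ((measure_mono hS'T).trans_lt hTfinlt).ne
      have hS'vol : ENNReal.ofReal θ * volume T / 2 ≤ volume S' := by
        by_contra h
        push_neg at h
        have hsplit : volume S ≤ volume S' + volume (A n) := by
          refine (measure_mono fun x hx => ?_).trans (measure_union_le _ _)
          by_cases hxA : x ∈ A n
          · exact Set.mem_union_right _ hxA
          · exact Set.mem_union_left _ ⟨hx, hxA⟩
        have hlt : volume S < ENNReal.ofReal θ * volume T := by
          calc volume S ≤ volume S' + volume (A n) := hsplit
            _ < ENNReal.ofReal θ * volume T / 2 + ENNReal.ofReal θ * volume T / 2 :=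
              ENNReal.add_lt_add h hn'
            _ = ENNReal.ofReal θ * volume T := ENNReal.add_halves _
        exact absurd hSθ (not_le.mpr hlt)
      have hfint : IntegrableOn (fun x => (EE d k c x) ^ 2) S volume :=
        hIntOn _ (hfc.pow 2) S hST
      have hmono : (∫ x in S', (EE d k c x) ^ 2) ≤ ∫ x in S, (EE d k c x) ^ 2 :=
        setIntegral_mono_set hfint
          (Filter.Eventually.of_forall fun x => sq_nonneg _)
          (HasSubset.Subset.eventuallyLE Set.diff_subset)
      have hlow : (1 / (n + 1) : ℝ) * (volume S').toReal ≤ ∫ x in S', (EE d k c x) ^ 2 := by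
        apply setIntegral_ge_of_const_le_real hS'm hS'fin
        · intro x hx
          have hxT : x ∈ T := hST hx.1
          have hnlt : ¬((EE d k c x) ^ 2 < 1 / (n + 1)) := fun hlt => hx.2 ⟨hxT, hlt⟩
          exact le_of_not_gt hnlt
        · exact hfint.mono_set Set.diff_subset
      calc (1 / (n + 1) : ℝ) * (ENNReal.ofReal θ * volume T / 2).toReal
          ≤ (1 / (n + 1) : ℝ) * (volume S').toReal := by
            apply mul_le_mul_of_nonneg_left _ (by positivity)
            exact ENNReal.toReal_mono hS'fin hS'vol
        _ ≤ ∫ x in S', (EE d k c x) ^ 2 := hlow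
        _ ≤ ∫ x in S, (EE d k c x) ^ 2 := hmono
  -- Lipschitz estimate
  set L : ℝ := 4 * K ^ 2 * (volume T).toReal with hLdef
  have hL0 : 0 ≤ L := by positivity
  have lip : ∀ c c' : ↥(DD d k) → ℝ, ‖c‖ ≤ 2 → ‖c'‖ ≤ 2 →
      ∀ S : Set (Fin d → ℝ), MeasurableSet S → S ⊆ T →
        |(∫ x in S, (EE d k c' x) ^ 2) - ∫ x in S, (EE d k c x) ^ 2| ≤ L * ‖c' - c‖ := by
    intro c c' hc hc' S hSm hST
    have hfS : IntegrableOn (fun x => (EE d k c x) ^ 2) S volume :=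
      hIntOn _ ((EE_cont d k c).pow 2) S hST
    have hfS' : IntegrableOn (fun x => (EE d k c' x) ^ 2) S volume :=
      hIntOn _ ((EE_cont d k c').pow 2) S hST
    have hSfin : volume S < ⊤ := (measure_mono hST).trans_lt hTfinlt
    have hsub : (∫ x in S, (EE d k c' x) ^ 2) - (∫ x in S, (EE d k c x) ^ 2)
        = ∫ x in S, ((EE d k c' x) ^ 2 - (EE d k c x) ^ 2) := (integral_sub hfS' hfS).symm
    rw [hsub]
    have hptw : ∀ x ∈ S, ‖(EE d k c' x) ^ 2 - (EE d k c x) ^ 2‖ ≤ 4 * K ^ 2 * ‖c' - c‖ := by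
      intro x hx
      have hxT := hST hx
      have hd : |EE d k c' x - EE d k c x| ≤ K * ‖c' - c‖ := by
        rw [← EE_sub]
        exact hKb _ x hxT
      have hsum : |EE d k c' x + EE d k c x| ≤ 4 * K := by
        have h1 := hKb c' x hxT
        have h2 := hKb c x hxT
        have h3 := abs_add_le (EE d k c' x) (EE d k c x)
        nlinarith [norm_nonneg c, norm_nonneg c', hK0]
      rw [Real.norm_eq_abs, sq_sub_sq, abs_mul]
      calc |EE d k c' x + EE d k c x| * |EE d k c' x - EE d k c x|
          ≤ (4 * K) * (K * ‖c' - c‖) :=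
            mul_le_mul hsum hd (abs_nonneg _) (by positivity)
        _ = 4 * K ^ 2 * ‖c' - c‖ := by ring
    have hnorm := norm_setIntegral_le_of_norm_le_const hSfin hptw
    rw [Real.norm_eq_abs] at hnorm
    calc |∫ x in S, ((EE d k c' x) ^ 2 - (EE d k c x) ^ 2)|
        ≤ 4 * K ^ 2 * ‖c' - c‖ * (volume S).toReal := hnorm
      _ ≤ 4 * K ^ 2 * ‖c' - c‖ * (volume T).toReal := by
          apply mul_le_mul_of_nonneg_left
            (ENNReal.toReal_mono hTfin (measure_mono hST)) (by positivity)
      _ = L * ‖c' - c‖ := by rw [hLdef]; ring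
  -- Step 2
  obtain ⟨m, hm0, key2⟩ : ∃ m : ℝ, 0 < m ∧ ∀ c : ↥(DD d k) → ℝ, ‖c‖ = 1 →
      ∀ S : Set (Fin d → ℝ), MeasurableSet S → S ⊆ T →
        ENNReal.ofReal θ * volume T ≤ volume S → m ≤ ∫ x in S, (EE d k c x) ^ 2 := by
    have hsph : IsCompact (Metric.sphere (0 : ↥(DD d k) → ℝ) 1) := isCompact_sphere 0 1
    choose! ε hε1 hε2 using key1
    have hcov : Metric.sphere (0 : ↥(DD d k) → ℝ) 1 ⊆
        ⋃ c ∈ Metric.sphere (0 : ↥(DD d k) → ℝ) 1, Metric.ball c (ε c / (2 * (L + 1))) := by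
      intro c hc
      have hc1 : ‖c‖ = 1 := mem_sphere_zero_iff_norm.mp hc
      have hc0 : c ≠ 0 := by intro h; rw [h, norm_zero] at hc1; norm_num at hc1
      have hrpos : 0 < ε c / (2 * (L + 1)) := by
        have := hε1 c hc0
        positivity
      exact Set.mem_biUnion hc (Metric.mem_ball_self hrpos)
    obtain ⟨b', hb'sub, hb'fin, hb'cov⟩ :=
      hsph.elim_finite_subcover_image (fun c _ => Metric.isOpen_ball) hcov
    haveI : Nonempty ↥(DD d k) := ⟨⟨0, hDD0⟩⟩
    have hsphne : (Metric.sphere (0 : ↥(DD d k) → ℝ) 1).Nonempty :=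
      NormedSpace.sphere_nonempty.mpr zero_le_one
    obtain ⟨c₀, hc₀⟩ := hsphne
    obtain ⟨i₀, hi₀b, _⟩ := Set.mem_iUnion₂.mp (hb'cov hc₀)
    have htne : hb'fin.toFinset.Nonempty := ⟨i₀, hb'fin.mem_toFinset.mpr hi₀b⟩
    have hne0 : ∀ i ∈ b', i ≠ 0 := by
      intro i hi h0
      have h1 := mem_sphere_zero_iff_norm.mp (hb'sub hi)
      rw [h0, norm_zero] at h1; norm_num at h1
    refine ⟨hb'fin.toFinset.inf' htne (fun i => ε i / 2), ?_, ?_⟩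
    · rw [Finset.lt_inf'_iff]
      intro i hi
      have := hε1 i (hne0 i (hb'fin.mem_toFinset.mp hi))
      positivity
    · intro c hc S hSm hST hSθ
      have hcs : c ∈ Metric.sphere (0 : ↥(DD d k) → ℝ) 1 :=
        mem_sphere_zero_iff_norm.mpr hc
      obtain ⟨i, hib, hci⟩ := Set.mem_iUnion₂.mp (hb'cov hcs)
      have hi0 : i ≠ 0 := hne0 i hib
      have hi1 : ‖i‖ = 1 := mem_sphere_zero_iff_norm.mp (hb'sub hib)
      have hεi : 0 < ε i := hε1 i hi0
      have hPi : ε i ≤ ∫ x in S, (EE d k i x) ^ 2 := hε2 i hi0 S hSm hST hSθ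
      have hdist : ‖c - i‖ < ε i / (2 * (L + 1)) := by
        rw [← dist_eq_norm]
        exact Metric.mem_ball.mp hci
      have hlip' := lip i c (by rw [hi1]; norm_num) (by rw [hc]; norm_num) S hSm hST
      have hstep : L * ‖c - i‖ ≤ ε i / 2 := by
        have h2L : (0:ℝ) < 2 * (L + 1) := by linarith
        have h1 : L * ‖c - i‖ ≤ L * (ε i / (2 * (L + 1))) :=
          mul_le_mul_of_nonneg_left hdist.le hL0
        have h2 : L * (ε i / (2 * (L + 1))) ≤ ε i / 2 := by
          rw [← mul_div_assoc, div_le_div_iff₀ h2L (by norm_num : (0:ℝ) < 2)]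
          nlinarith
        linarith
      have habs := abs_le.mp hlip'
      calc hb'fin.toFinset.inf' htne (fun i => ε i / 2) ≤ ε i / 2 :=
            Finset.inf'_le _ (hb'fin.mem_toFinset.mpr hib)
        _ ≤ ∫ x in S, (EE d k c x) ^ 2 := by linarith [habs.1]
  -- Step 3
  refine ⟨K / Real.sqrt m, div_pos hK0 (Real.sqrt_pos.mpr hm0), ?_⟩
  intro p hdeg S hSm hST hSθ
  have hRhs0 : (0 : ℝ) ≤ K / Real.sqrt m * Real.sqrt (∫ x in S, (eval x p) ^ 2) := by
    have := Real.sqrt_nonneg (∫ x in S, (eval x p) ^ 2)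
    have := (div_pos hK0 (Real.sqrt_pos.mpr hm0)).le
    positivity
  by_cases hp0 : p = 0
  · subst hp0
    refine Real.iSup_le (fun x => Real.iSup_le (fun _ => by simpa using hRhs0) hRhs0) hRhs0
  · set c : ↥(DD d k) → ℝ := fun s => p.coeff s with hcdef
    have hc0 : c ≠ 0 := by
      obtain ⟨t, ht⟩ := ne_zero_iff.mp hp0
      have htD : t ∈ DD d k := by
        rw [mem_DD_iff]
        intro i
        calc t i ≤ t.sum fun _ e => e := by
              by_cases hi : i ∈ t.support
              · exact Finset.single_le_sum (f := fun i => t i) (fun j _ => Nat.zero_le _) hi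
              · rw [Finsupp.notMem_support_iff.mp hi]; exact Nat.zero_le _
          _ ≤ p.totalDegree := le_totalDegree (mem_support_iff.mpr ht)
          _ ≤ k := hdeg
      intro h
      exact ht (by have := congrFun h ⟨t, htD⟩; simpa [hcdef] using this)
    have hcnorm : (0 : ℝ) < ‖c‖ := norm_pos_iff.mpr hc0
    have hevalE : ∀ x, eval x p = EE d k c x := fun x => eval_eq_EE d k p hdeg x
    have hInn : (0:ℝ) ≤ ∫ x in S, (eval x p) ^ 2 :=
      integral_nonneg fun x => sq_nonneg _
    have hIeq : (∫ x in S, (eval x p) ^ 2) = ∫ x in S, (EE d k c x) ^ 2 := by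
      refine integral_congr_ae (Filter.Eventually.of_forall fun x => ?_)
      simp only [hevalE]
    have hIm : m * ‖c‖ ^ 2 ≤ ∫ x in S, (eval x p) ^ 2 := by
      have hu : ‖(‖c‖⁻¹ • c)‖ = 1 := by
        rw [norm_smul, norm_inv, norm_norm, inv_mul_cancel₀ hcnorm.ne']
      have hkey := key2 (‖c‖⁻¹ • c) hu S hSm hST hSθ
      have heq : (∫ x in S, (EE d k (‖c‖⁻¹ • c) x) ^ 2)
          = ‖c‖⁻¹ ^ 2 * ∫ x in S, (EE d k c x) ^ 2 := by
        rw [← integral_const_mul]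
        refine integral_congr_ae (Filter.Eventually.of_forall fun x => ?_)
        simp only [EE_smul]; ring
      rw [heq] at hkey
      have := mul_le_mul_of_nonneg_right hkey (sq_nonneg ‖c‖)
      calc m * ‖c‖ ^ 2 ≤ ‖c‖⁻¹ ^ 2 * (∫ x in S, (EE d k c x) ^ 2) * ‖c‖ ^ 2 := this
        _ = ∫ x in S, (EE d k c x) ^ 2 := by field_simp
        _ = ∫ x in S, (eval x p) ^ 2 := hIeq.symm
    have hcle : K * ‖c‖ ≤ K / Real.sqrt m * Real.sqrt (∫ x in S, (eval x p) ^ 2) := by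
      have h1 : Real.sqrt (m * ‖c‖ ^ 2) ≤ Real.sqrt (∫ x in S, (eval x p) ^ 2) :=
        Real.sqrt_le_sqrt hIm
      rw [Real.sqrt_mul hm0.le, Real.sqrt_sq (norm_nonneg c)] at h1
      have hsm : (0:ℝ) < Real.sqrt m := Real.sqrt_pos.mpr hm0
      calc K * ‖c‖ = K / Real.sqrt m * (Real.sqrt m * ‖c‖) := by field_simp
        _ ≤ K / Real.sqrt m * Real.sqrt (∫ x in S, (eval x p) ^ 2) :=
          mul_le_mul_of_nonneg_left h1 (div_pos hK0 hsm).le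
    refine Real.iSup_le (fun x => Real.iSup_le (fun hx => ?_) hRhs0) hRhs0
    calc |eval x p| = |EE d k c x| := by rw [hevalE]
      _ ≤ K * ‖c‖ := hKb c x hx
      _ ≤ _ := hcle
end

section
/- Let T ⊆ ℝ^d be a Lebesgue-measurable set with 0 < μ(T) < ∞, let θ ∈ (0,1], and let p : ℝ^d → ℝ be a nonzero polynomial function. Then there exists a constant c > 0 such that for every Lebesgue-measurable set S ⊆ T with μ(S) ≥ θ·μ(T), one has ∫_S p(x)² dμ(x) ≥ c. Equivalently, N_θ(p) > 0. -/
open MeasureTheory ENNReal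

/-- The functional `N_θ(f) = inf { (∫_S f² dμ)^{1/2} : S ⊆ T measurable, μ S ≥ θ·μ T }`
from the proof of Proposition A0 of the paper (extended-real-valued version, using the
lower Lebesgue integral). -/
noncomputable def NthetaL (d : ℕ) (T : Set (Fin d → ℝ)) (θ : ℝ)
    (f : (Fin d → ℝ) → ℝ) : ℝ≥0∞ :=
  sInf {r : ℝ≥0∞ | ∃ S : Set (Fin d → ℝ), MeasurableSet S ∧ S ⊆ T ∧
    ENNReal.ofReal θ * volume T ≤ volume S ∧
    r = (∫⁻ x in S, ENNReal.ofReal (f x ^ 2)) ^ ((1 : ℝ) / 2)}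

lemma mv_zero_set_null : ∀ (n : ℕ) (p : MvPolynomial (Fin n) ℝ), p ≠ 0 →
    volume {x : Fin n → ℝ | MvPolynomial.eval x p = 0} = 0 := by
  intro n
  induction n with
  | zero =>
    intro p hp
    obtain ⟨a, rfl⟩ := MvPolynomial.C_surjective (Fin 0) p
    have ha : a ≠ 0 := fun h => hp (by simp [h])
    have : {x : Fin 0 → ℝ | MvPolynomial.eval x (MvPolynomial.C a) = 0} = ∅ := by
      ext x; simp [ha]
    rw [this]; simp
  | succ n ih =>
    intro p hp
    set q : Polynomial (MvPolynomial (Fin n) ℝ) := MvPolynomial.finSuccEquiv ℝ n p with hqdef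
    have hq : q ≠ 0 := by
      intro h
      apply hp
      have := congrArg (MvPolynomial.finSuccEquiv ℝ n).symm h
      simpa [hqdef] using this
    have hlc : q.leadingCoeff ≠ 0 := Polynomial.leadingCoeff_ne_zero.mpr hq
    have hN : volume {s : Fin n → ℝ | MvPolynomial.eval s q.leadingCoeff = 0} = 0 := ih _ hlc
    set B : Set ((Fin n → ℝ) × ℝ) :=
      {sy | MvPolynomial.eval (Fin.cons sy.2 sy.1) p = 0} with hBdef
    have hcons : Continuous (fun sy : (Fin n → ℝ) × ℝ => (Fin.cons sy.2 sy.1 : Fin (n+1) → ℝ)) := by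
      apply continuous_pi
      intro i
      refine Fin.cases ?_ ?_ i
      · simpa using (continuous_snd : Continuous fun sy : (Fin n → ℝ) × ℝ => sy.2)
      · intro j
        simpa using (show
          Continuous fun sy : (Fin n → ℝ) × ℝ => sy.1 j from (continuous_apply j).comp continuous_fst)
    have hBmeas : MeasurableSet B :=
      (isClosed_eq ((MvPolynomial.continuous_eval p).comp hcons) continuous_const).measurableSet
    have hB : (volume.prod volume : Measure ((Fin n → ℝ) × ℝ)) B = 0 := by
      rw [Measure.measure_prod_null hBmeas]
      have hNc : ∀ᵐ s : Fin n → ℝ, MvPolynomial.eval s q.leadingCoeff ≠ 0 := by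
        rw [ae_iff]; simpa using hN
      filter_upwards [hNc] with s hs
      have hr : q.map (MvPolynomial.eval s) ≠ 0 := by
        intro h
        apply hs
        have hco := congrArg (fun r => Polynomial.coeff r q.natDegree) h
        simp only [Polynomial.coeff_map, Polynomial.coeff_zero] at hco
        rw [Polynomial.leadingCoeff]
        exact hco
      have hpre : (Prod.mk s ⁻¹' B) = {y : ℝ | Polynomial.eval y (q.map (MvPolynomial.eval s)) = 0} := by
        ext y
        simp only [hBdef, Set.mem_preimage, Set.mem_setOf_eq]
        rw [MvPolynomial.eval_eq_eval_mv_eval' s y p]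
      show volume (Prod.mk s ⁻¹' B) = 0
      rw [hpre]
      exact (Polynomial.finite_setOf_isRoot hr).measure_zero _
    have e := MeasureTheory.volume_preserving_piFinSuccAbove (fun _ : Fin (n+1) => ℝ) 0
    set A : Set (ℝ × (Fin n → ℝ)) := Prod.swap ⁻¹' B with hAdef
    have hAmeas : MeasurableSet A := hBmeas.preimage measurable_swap
    have hZA : {x : Fin (n+1) → ℝ | MvPolynomial.eval x p = 0} =
        (MeasurableEquiv.piFinSuccAbove (fun _ : Fin (n+1) => ℝ) 0) ⁻¹' A := by
      ext f
      simp only [Set.mem_setOf_eq, Set.mem_preimage, hAdef, hBdef,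
        MeasurableEquiv.piFinSuccAbove_apply]
      constructor
      · intro h
        simpa [Fin.cons_self_tail] using h
      · intro h
        simpa [Fin.cons_self_tail] using h
    rw [hZA, e.measure_preimage hAmeas.nullMeasurableSet]
    have hswap : (volume.prod volume : Measure (ℝ × (Fin n → ℝ))) A = 0 := by
      rw [hAdef, ← Measure.map_apply measurable_swap hBmeas, Measure.prod_swap, hB]
    exact hswap

/-- the positivity claim `α > 0` in the proof of Proposition A0 of the
paper. If `T` is measurable with `0 < μ T < ∞`, `θ ∈ (0,1]` and `p` is a nonzero
polynomial, then there is `c > 0` with `∫_S p² dμ ≥ c` for every measurable `S ⊆ T`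
with `μ S ≥ θ·μ T`; equivalently, `N_θ(p) > 0`. -/
theorem statement_3 (d : ℕ) (T : Set (Fin d → ℝ)) (hT : MeasurableSet T)
    (hT0 : 0 < volume T) (hTfin : volume T ≠ ⊤) (θ : ℝ) (hθ : θ ∈ Set.Ioc (0 : ℝ) 1)
    (p : MvPolynomial (Fin d) ℝ) (hp : p ≠ 0) :
    (∃ c : ℝ, 0 < c ∧
      ∀ S : Set (Fin d → ℝ), MeasurableSet S → S ⊆ T →
        ENNReal.ofReal θ * volume T ≤ volume S →
        ENNReal.ofReal c ≤ ∫⁻ x in S, ENNReal.ofReal ((MvPolynomial.eval x p) ^ 2)) ∧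
    0 < NthetaL d T θ (fun x => MvPolynomial.eval x p) := by
  obtain ⟨hθ0, hθ1⟩ := hθ
  set m := volume T with hm
  set b : ℝ≥0∞ := ENNReal.ofReal θ * m / 2 with hb
  have hθm0 : ENNReal.ofReal θ * m ≠ 0 := by
    apply mul_ne_zero
    · simpa [ENNReal.ofReal_eq_zero, not_le] using hθ0
    · exact hT0.ne'
  have hθmfin : ENNReal.ofReal θ * m ≠ ⊤ :=
    ENNReal.mul_ne_top ENNReal.ofReal_ne_top hTfin
  have hb0 : b ≠ 0 := by
    simp only [hb, ne_eq, ENNReal.div_eq_zero_iff]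
    push_neg
    exact ⟨hθm0, by norm_num⟩
  have hbfin : b ≠ ⊤ := by
    simp only [hb]
    exact (ENNReal.div_lt_top hθmfin (by norm_num)).ne
  have hbb : b + b = ENNReal.ofReal θ * m := by
    rw [hb, ← two_mul, ENNReal.mul_div_cancel' (by norm_num) (by norm_num)]
  -- the sets E n
  set E : ℕ → Set (Fin d → ℝ) :=
    fun n => T ∩ {x | (1 : ℝ) / (n + 1) ≤ (MvPolynomial.eval x p) ^ 2} with hE
  have hEmeas : ∀ n, MeasurableSet (E n) := by
    intro n
    exact hT.inter ((isClosed_le continuous_const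
      (((MvPolynomial.continuous_eval p).pow 2))).measurableSet)
  set D : ℕ → Set (Fin d → ℝ) := fun n => T \ E n with hD
  have hDanti : Antitone D := by
    intro a c hac
    apply Set.diff_subset_diff_right
    apply Set.inter_subset_inter_right
    intro x hx
    simp only [Set.mem_setOf_eq] at hx ⊢
    refine le_trans ?_ hx
    apply div_le_div_of_nonneg_left (by norm_num) (by positivity)
    push_cast; linarith [(Nat.cast_le (α := ℝ)).mpr hac]
  have hDinter : (⋂ n, D n) ⊆ {x | MvPolynomial.eval x p = 0} := by
    intro x hx
    simp only [Set.mem_iInter, hD, Set.mem_diff, hE, Set.mem_inter_iff, Set.mem_setOf_eq,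
      not_and, not_le] at hx
    have hxT : x ∈ T := (hx 0).1
    have hlt : ∀ n : ℕ, (MvPolynomial.eval x p) ^ 2 < 1 / (n + 1) := fun n => (hx n).2 hxT
    have hle : (MvPolynomial.eval x p) ^ 2 ≤ 0 := by
      by_contra hpos
      push_neg at hpos
      obtain ⟨n, hn⟩ := exists_nat_gt (1 / (MvPolynomial.eval x p) ^ 2)
      have h1 : 1 / ((n : ℝ) + 1) < (MvPolynomial.eval x p) ^ 2 := by
        rw [div_lt_iff₀ (by positivity)]
        rw [div_lt_iff₀ hpos] at hn
        nlinarith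
      exact absurd (hlt n) (not_lt.mpr h1.le)
    have := sq_nonneg (MvPolynomial.eval x p)
    have h0 : (MvPolynomial.eval x p) ^ 2 = 0 := le_antisymm hle this
    simpa using pow_eq_zero_iff (n := 2) (by norm_num) |>.mp h0
  have hZ : volume {x : Fin d → ℝ | MvPolynomial.eval x p = 0} = 0 := mv_zero_set_null d p hp
  have hDlim : Filter.Tendsto (fun n => volume (D n)) Filter.atTop (nhds (volume (⋂ n, D n))) := by
    apply tendsto_measure_iInter_atTop (fun n => ((hT.diff (hEmeas n)).nullMeasurableSet)) hDanti
    exact ⟨0, ne_top_of_le_ne_top hTfin (measure_mono Set.diff_subset)⟩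
  have hDinter0 : volume (⋂ n, D n) = 0 :=
    le_antisymm (le_trans (measure_mono hDinter) hZ.le) (zero_le)
  rw [hDinter0] at hDlim
  have hev : ∀ᶠ n in Filter.atTop, volume (D n) < b :=
    hDlim.eventually_lt_const (lt_of_le_of_ne (zero_le) (Ne.symm hb0))
  obtain ⟨n, hn⟩ := hev.exists
  -- the constant
  set c : ℝ := (1 / (n + 1)) * b.toReal with hc
  have hc0 : 0 < c := by
    have hbt : (0 : ℝ) < b.toReal := ENNReal.toReal_pos hb0 hbfin
    rw [hc]
    positivity
  have hmain : ∀ S : Set (Fin d → ℝ), MeasurableSet S → S ⊆ T →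
      ENNReal.ofReal θ * volume T ≤ volume S →
      ENNReal.ofReal c ≤ ∫⁻ x in S, ENNReal.ofReal ((MvPolynomial.eval x p) ^ 2) := by
    intro S hSmeas hST hSvol
    have hSE : b ≤ volume (S ∩ E n) := by
      have h1 : volume S ≤ volume (S ∩ E n) + volume (S \ E n) :=
        measure_le_inter_add_diff _ _ _
      have h2 : volume (S \ E n) ≤ volume (D n) :=
        measure_mono (fun x hx => ⟨hST hx.1, hx.2⟩)
      have h3 : b + b ≤ volume (S ∩ E n) + b := by
        calc b + b = ENNReal.ofReal θ * m := hbb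
        _ ≤ volume S := hSvol
        _ ≤ volume (S ∩ E n) + volume (S \ E n) := h1
        _ ≤ volume (S ∩ E n) + b := add_le_add_right (h2.trans hn.le) _
      exact ENNReal.le_of_add_le_add_right hbfin (by rwa [add_comm b b] at h3)
    calc ENNReal.ofReal c = ENNReal.ofReal (1 / (n + 1)) * b := by
          rw [hc, ENNReal.ofReal_mul (by positivity), ENNReal.ofReal_toReal hbfin]
      _ ≤ ENNReal.ofReal (1 / (n + 1)) * volume (S ∩ E n) := by
          exact mul_le_mul_right hSE _
      _ = ∫⁻ _ in S ∩ E n, ENNReal.ofReal (1 / (n + 1)) := by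
          rw [setLIntegral_const, mul_comm]
      _ ≤ ∫⁻ x in S ∩ E n, ENNReal.ofReal ((MvPolynomial.eval x p) ^ 2) := by
          apply setLIntegral_mono' (hSmeas.inter (hEmeas n))
          intro x hx
          exact ENNReal.ofReal_le_ofReal (by exact_mod_cast hx.2.2)
      _ ≤ ∫⁻ x in S, ENNReal.ofReal ((MvPolynomial.eval x p) ^ 2) :=
          lintegral_mono_set Set.inter_subset_left
  refine ⟨⟨c, hc0, hmain⟩, ?_⟩
  have hlb : ENNReal.ofReal c ^ ((1:ℝ)/2) ≤ NthetaL d T θ (fun x => MvPolynomial.eval x p) := by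
    apply le_sInf
    rintro r ⟨S, hSmeas, hST, hSvol, rfl⟩
    exact ENNReal.rpow_le_rpow (hmain S hSmeas hST hSvol) (by norm_num)
  refine lt_of_lt_of_le ?_ hlb
  apply ENNReal.rpow_pos
  · simpa [ENNReal.ofReal_pos] using hc0
  · exact ENNReal.ofReal_ne_top
end
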